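/- Let 1 < p < ∞ and let (Ω,μ) be a measure space. For a measurable function f on Ω with f**(∞) = lim_{t→∞} f**(t) = 0, the following three conditions are equivalent: (a) ‖f‖*_{L(p,∞)} = sup_{s>0} s^{1/p} f*(s) < ∞ (equivalently ‖f‖_{L(p,∞)} = sup_{s>0} s^{1/p} f**(s) < ∞); (b) ‖f‖^#_{L(p,∞)} = sup_{s>0} s^{1/p}( f**(s) − f*(s) ) < ∞; (c) ‖f‖^{##}_{L(p,∞)} = sup_{t>0} (λ_f(t))^{−(1−1/p)} ∫_t^∞ λ_f(s) ds < ∞. -/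

import Mathlib

open MeasureTheory Set
open scoped ENNReal NNReal

noncomputable section

/-- The distribution function `λ_f(t) = μ {x : |f(x)| > t}`. -/
def distFun {α : Type*} [MeasurableSpace α] (μ : Measure α) (f : α → ℝ) (t : ℝ) : ℝ≥0∞ :=
  μ {x | t < |f x|}

/-- The non-increasing rearrangement `f*(t) = inf {s > 0 : λ_f(s) ≤ t}`. -/
def rearr {α : Type*} [MeasurableSpace α] (μ : Measure α) (f : α → ℝ) (t : ℝ) : ℝ≥0∞ :=
  sInf (ENNReal.ofReal '' {s : ℝ | 0 < s ∧ distFun μ f s ≤ ENNReal.ofReal t})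

/-- The maximal function `f**(t) = (1/t) ∫₀ᵗ f*(s) ds`. -/
def dstar {α : Type*} [MeasurableSpace α] (μ : Measure α) (f : α → ℝ) (t : ℝ) : ℝ≥0∞ :=
  (∫⁻ s in Set.Ioc (0 : ℝ) t, rearr μ f s) / ENNReal.ofReal t

/-- The `L(∞,∞)` "norm" : `sup_{t>0} (f**(t) - f*(t))`. -/
def oscNorm {α : Type*} [MeasurableSpace α] (μ : Measure α) (f : α → ℝ) : ℝ≥0∞ :=
  ⨆ (t : ℝ) (_ : 0 < t), dstar μ f t - rearr μ f t

/-- The Marcinkiewicz `L(p,∞)` quasinorm `‖f‖*_{L(p,∞)} = sup_{t>0} t (λ_f(t))^{1/p}`. -/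
def wkNorm {α : Type*} [MeasurableSpace α] (μ : Measure α) (p : ℝ) (f : α → ℝ) : ℝ≥0∞ :=
  ⨆ (t : ℝ) (_ : 0 < t), ENNReal.ofReal t * distFun μ f t ^ (1 / p)

/-- `‖f‖_{L(p,∞)} = sup_{s>0} s^{1/p} f**(s)`. -/
def wkNormStarStar {α : Type*} [MeasurableSpace α] (μ : Measure α) (p : ℝ) (f : α → ℝ) : ℝ≥0∞ :=
  ⨆ (s : ℝ) (_ : 0 < s), ENNReal.ofReal s ^ (1 / p) * dstar μ f s

/-- `‖f‖*_{L(p,∞)} = sup_{s>0} s^{1/p} f*(s)` (rearrangement form). -/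
def wkNormStar {α : Type*} [MeasurableSpace α] (μ : Measure α) (p : ℝ) (f : α → ℝ) : ℝ≥0∞ :=
  ⨆ (s : ℝ) (_ : 0 < s), ENNReal.ofReal s ^ (1 / p) * rearr μ f s

/-- `‖f‖^#_{L(p,∞)} = sup_{s>0} s^{1/p} (f**(s) - f*(s))`. -/
def sharpNorm {α : Type*} [MeasurableSpace α] (μ : Measure α) (p : ℝ) (f : α → ℝ) : ℝ≥0∞ :=
  ⨆ (s : ℝ) (_ : 0 < s), ENNReal.ofReal s ^ (1 / p) * (dstar μ f s - rearr μ f s)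

/-- `‖f‖^{##}_{L(p,∞)} = sup_{t>0} (λ_f(t))^{-(1-1/p)} ∫_t^∞ λ_f(s) ds`. -/
def sharpSharpNorm {α : Type*} [MeasurableSpace α] (μ : Measure α) (p : ℝ) (f : α → ℝ) : ℝ≥0∞ :=
  ⨆ (t : ℝ) (_ : 0 < t),
    distFun μ f t ^ (-(1 - 1 / p)) * ∫⁻ s in Set.Ioi t, distFun μ f s

/-- `‖f‖^{##}_{L(∞,∞)} = inf {C : ∫_t^∞ λ_f(s) ds ≤ C λ_f(t) for all t > 0}`. -/
def sharpSharpInf {α : Type*} [MeasurableSpace α] (μ : Measure α) (f : α → ℝ) : ℝ≥0∞ :=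
  sInf {C : ℝ≥0∞ | ∀ t : ℝ, 0 < t →
    ∫⁻ s in Set.Ioi t, distFun μ f s ≤ C * distFun μ f t}

/-- O'Neil's quantity `inf {C^{1/p} : ∫_t^∞ λ_f(s) ds ≤ C t^{1-p} for all t > 0}`. -/
def oneilQuantity {α : Type*} [MeasurableSpace α] (μ : Measure α) (p : ℝ) (f : α → ℝ) : ℝ≥0∞ :=
  sInf {D : ℝ≥0∞ | ∃ C : ℝ≥0∞, D = C ^ (1 / p) ∧
    ∀ t : ℝ, 0 < t → ∫⁻ s in Set.Ioi t, distFun μ f s ≤ C * ENNReal.ofReal t ^ (1 - p)}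

/-- A cube in `ℝⁿ` with sides parallel to the coordinate axes. -/
def IsCube {n : ℕ} (Q : Set (Fin n → ℝ)) : Prop :=
  ∃ (a : Fin n → ℝ) (l : ℝ), 0 < l ∧ Q = Set.univ.pi fun i => Set.Icc (a i) (a i + l)

/-- A countable family of subcubes of `Q₀` with pairwise disjoint interiors. -/
def IsPackingIn {n : ℕ} (Q₀ : Set (Fin n → ℝ)) (Q : ℕ → Set (Fin n → ℝ)) : Prop :=
  (∀ i, IsCube (Q i) ∧ Q i ⊆ Q₀) ∧
    Pairwise fun i j => interior (Q i) ∩ interior (Q j) = ∅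

/-- The average `f_Q = (1/|Q|) ∫_Q f`. -/
def cubeAvg {n : ℕ} (f : (Fin n → ℝ) → ℝ) (Q : Set (Fin n → ℝ)) : ℝ :=
  ⨍ x in Q, f x

/-- The mean oscillation `(1/|Q|) ∫_Q |f - f_Q|`. -/
def meanOsc {n : ℕ} (f : (Fin n → ℝ) → ℝ) (Q : Set (Fin n → ℝ)) : ℝ :=
  ⨍ x in Q, |f x - cubeAvg f Q|

/-- The John–Nirenberg functional `JN_p(f,Q₀)`. -/
def JN {n : ℕ} (p : ℝ) (f : (Fin n → ℝ) → ℝ) (Q₀ : Set (Fin n → ℝ)) : ℝ≥0∞ :=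
  ⨆ (Q : ℕ → Set (Fin n → ℝ)) (_ : IsPackingIn Q₀ Q),
    (∑' i, volume (Q i) * ENNReal.ofReal (meanOsc f (Q i)) ^ p) ^ (1 / p)

/-- The BMO norm `‖f‖_{BMO(Q₀)}`. -/
def bmoNorm {n : ℕ} (f : (Fin n → ℝ) → ℝ) (Q₀ : Set (Fin n → ℝ)) : ℝ≥0∞ :=
  ⨆ (Q : Set (Fin n → ℝ)) (_ : IsCube Q ∧ Q ⊆ Q₀), ENNReal.ofReal (meanOsc f Q)

/-- The Garsia–Rodemich functional `GaRo_p(f,Q₀)`: the least constant `C` such that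
for every packing `{Qᵢ}` of `Q₀`,
`Σᵢ (1/|Qᵢ|) ∫_{Qᵢ}∫_{Qᵢ} |f(x)-f(y)| dx dy ≤ C (Σᵢ |Qᵢ|)^{1/p'}` where `1/p' = 1 - 1/p`. -/
def GaRo {n : ℕ} (p : ℝ) (f : (Fin n → ℝ) → ℝ) (Q₀ : Set (Fin n → ℝ)) : ℝ≥0∞ :=
  sInf {C : ℝ≥0∞ | ∀ Q : ℕ → Set (Fin n → ℝ), IsPackingIn Q₀ Q →
    (∑' i, (volume (Q i))⁻¹ *
        ∫⁻ x in Q i, ∫⁻ y in Q i, ENNReal.ofReal |f x - f y|) ≤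
      C * (∑' i, volume (Q i)) ^ (1 - 1 / p)}

section Helpers

variable {α : Type*} [MeasurableSpace α] (μ : Measure α) (f : α → ℝ)

lemma L_anti : Antitone (distFun μ f) :=
  fun _ _ h => measure_mono (fun _ hx => lt_of_le_of_lt h hx)

lemma L_meas : Measurable (distFun μ f) := (L_anti μ f).measurable

lemma R_anti : Antitone (rearr μ f) := by
  intro s t h
  refine sInf_le_sInf (image_mono ?_)
  exact fun w hw => ⟨hw.1, hw.2.trans (ENNReal.ofReal_le_ofReal h)⟩

lemma R_meas : Measurable (rearr μ f) := (R_anti μ f).measurable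

lemma R_le_of_mem {u t : ℝ} (ht : 0 < t) (h : distFun μ f t ≤ ENNReal.ofReal u) :
    rearr μ f u ≤ ENNReal.ofReal t :=
  sInf_le ⟨t, ⟨ht, h⟩, rfl⟩

lemma L_gt (hf : Measurable f) (v : ℝ) {c : ℝ≥0∞} (hc : c < distFun μ f v) :
    ∃ w, v < w ∧ c < distFun μ f w := by
  have hU : {x | v < |f x|} = ⋃ n : ℕ, {x | v + 1/(n+1) < |f x|} := by
    ext x
    simp only [mem_setOf_eq, mem_iUnion]
    constructor
    · intro h
      obtain ⟨n, hn⟩ := exists_nat_one_div_lt (sub_pos.mpr h)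
      exact ⟨n, by linarith⟩
    · rintro ⟨n, hn⟩
      have : (0:ℝ) < 1/(n+1) := by positivity
      linarith
  have hdir : Monotone fun n : ℕ => {x | v + 1/(n+1) < |f x|} := by
    intro m n hmn x hx
    simp only [mem_setOf_eq] at hx ⊢
    have : (1:ℝ)/(n+1) ≤ 1/(m+1) := by
      apply one_div_le_one_div_of_le <;> [positivity; exact_mod_cast by omega]
    linarith
  have := Directed.measure_iUnion (μ := μ) (s := fun n : ℕ => {x | v + 1/(n+1) < |f x|})
    hdir.directed_le
  rw [distFun, hU, this] at hc
  obtain ⟨n, hn⟩ := lt_iSup_iff.mp hc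
  exact ⟨v + 1/(n+1), lt_add_of_pos_right v (by positivity), hn⟩

lemma dual (hf : Measurable f) {u v : ℝ} (hu : 0 < u) (hv : 0 < v) :
    ENNReal.ofReal v < rearr μ f u ↔ ENNReal.ofReal u < distFun μ f v := by
  constructor
  · intro h
    by_contra hc
    push_neg at hc
    exact absurd (R_le_of_mem μ f hv hc) (not_le.mpr h)
  · intro h
    obtain ⟨w, hvw, hw⟩ := L_gt μ f hf v h
    have h1 : ENNReal.ofReal v < ENNReal.ofReal w :=
      (ENNReal.ofReal_lt_ofReal_iff (hv.trans hvw)).mpr hvw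
    refine lt_of_lt_of_le h1 (le_sInf ?_)
    rintro b ⟨w', ⟨hw', hLw'⟩, rfl⟩
    refine ENNReal.ofReal_le_ofReal ?_
    by_contra hcon
    push_neg at hcon
    exact absurd (hLw'.trans_lt hw) (not_lt.mpr (L_anti μ f hcon.le))

end Helpers
section Helpers2

variable {α : Type*} [MeasurableSpace α] (μ : Measure α) (f : α → ℝ)

lemma int_Ioc_ge (a b : ℝ) (hab : a ≤ b) :
    ENNReal.ofReal (b - a) * rearr μ f b ≤ ∫⁻ u in Set.Ioc a b, rearr μ f u := by
  calc ENNReal.ofReal (b - a) * rearr μ f b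
      = ∫⁻ _ in Set.Ioc a b, rearr μ f b := by
        rw [setLIntegral_const, Real.volume_Ioc, mul_comm]
    _ ≤ ∫⁻ u in Set.Ioc a b, rearr μ f u :=
        setLIntegral_mono' measurableSet_Ioc (fun x hx => R_anti μ f hx.2)

lemma int_Ioc_le (a b : ℝ) :
    ∫⁻ u in Set.Ioc a b, rearr μ f u ≤ ENNReal.ofReal (b - a) * rearr μ f a := by
  calc ∫⁻ u in Set.Ioc a b, rearr μ f u
      ≤ ∫⁻ _ in Set.Ioc a b, rearr μ f a :=
        setLIntegral_mono' measurableSet_Ioc (fun x hx => R_anti μ f hx.1.le)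
    _ = ENNReal.ofReal (b - a) * rearr μ f a := by
        rw [setLIntegral_const, Real.volume_Ioc, mul_comm]

lemma R_le_D {t : ℝ} (ht : 0 < t) : rearr μ f t ≤ dstar μ f t := by
  rw [dstar, ENNReal.le_div_iff_mul_le (Or.inl (by simp [ht])) (Or.inl ENNReal.ofReal_ne_top)]
  have := int_Ioc_ge μ f 0 t ht.le
  rwa [sub_zero, mul_comm] at this

lemma D_top_of_R_top {u : ℝ} (hu : 0 < u) (hR : rearr μ f u = ⊤) {t : ℝ} (hut : u ≤ t) :
    dstar μ f t = ⊤ := by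
  have h1 : ENNReal.ofReal u * rearr μ f u ≤ ∫⁻ s in Set.Ioc (0:ℝ) t, rearr μ f s := by
    calc ENNReal.ofReal u * rearr μ f u
        ≤ ∫⁻ s in Set.Ioc (0:ℝ) u, rearr μ f s := by
          simpa using int_Ioc_ge μ f 0 u hu.le
      _ ≤ ∫⁻ s in Set.Ioc (0:ℝ) t, rearr μ f s :=
          lintegral_mono_set (Set.Ioc_subset_Ioc_right hut)
  rw [hR, ENNReal.mul_top (by simp [hu]), top_le_iff] at h1
  rw [dstar, h1]
  exact ENNReal.top_div_of_ne_top ENNReal.ofReal_ne_top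

lemma R_lt_top (hlim : Filter.Tendsto (dstar μ f) Filter.atTop (nhds 0)) {u : ℝ}
    (hu : 0 < u) : rearr μ f u ≠ ⊤ := by
  intro hR
  have hev : ∀ᶠ t in Filter.atTop, dstar μ f t < 1 :=
    hlim.eventually_lt_const (by norm_num)
  obtain ⟨t, ht, hlt⟩ := (hev.and (Filter.eventually_ge_atTop u)).exists
  rw [D_top_of_R_top μ f hu hR hlt] at ht
  exact absurd ht (by simp)

lemma L_lt_top (hlim : Filter.Tendsto (dstar μ f) Filter.atTop (nhds 0)) {t : ℝ}
    (ht : 0 < t) : distFun μ f t ≠ ⊤ := by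
  intro hL
  have hRge : ∀ u : ℝ, ENNReal.ofReal t ≤ rearr μ f u := by
    intro u
    refine le_sInf ?_
    rintro b ⟨w, ⟨hw, hLw⟩, rfl⟩
    refine ENNReal.ofReal_le_ofReal ?_
    by_contra hc
    push_neg at hc
    have : distFun μ f w = ⊤ := top_le_iff.mp (hL ▸ L_anti μ f hc.le)
    rw [this] at hLw
    exact absurd (top_le_iff.mp hLw) ENNReal.ofReal_ne_top
  have hD : ∀ s : ℝ, 0 < s → ENNReal.ofReal t ≤ dstar μ f s := by
    intro s hs
    rw [dstar, ENNReal.le_div_iff_mul_le (Or.inl (by simp [hs])) (Or.inl ENNReal.ofReal_ne_top)]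
    calc ENNReal.ofReal t * ENNReal.ofReal s
        = ENNReal.ofReal (s - 0) * ENNReal.ofReal t := by rw [sub_zero, mul_comm]
      _ ≤ ∫⁻ u in Set.Ioc (0:ℝ) s, rearr μ f u := by
          refine le_trans (mul_le_mul_right (hRge s) _) (int_Ioc_ge μ f 0 s hs.le)
  have hev : ∀ᶠ s in Filter.atTop, dstar μ f s < ENNReal.ofReal t :=
    hlim.eventually_lt_const (by simp [ht])
  obtain ⟨s, hs1, hs2⟩ := (hev.and (Filter.eventually_ge_atTop 1)).exists
  exact absurd (hD s (by linarith)) (not_le.mpr hs1)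

end Helpers2
section Helpers3

variable {α : Type*} [MeasurableSpace α] (μ : Measure α) (f : α → ℝ)

lemma aux_slice (c : ℝ≥0∞) :
    ∫⁻ v in Set.Ioi (0:ℝ), (if ENNReal.ofReal v < c then (1:ℝ≥0∞) else 0) = c := by
  have hS : MeasurableSet {v : ℝ | ENNReal.ofReal v < c} :=
    ENNReal.measurable_ofReal (measurableSet_Iio (a := c))
  have h1 : ∀ v : ℝ, (if ENNReal.ofReal v < c then (1:ℝ≥0∞) else 0)
      = {v' : ℝ | ENNReal.ofReal v' < c}.indicator (fun _ => 1) v := by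
    intro v; rw [Set.indicator_apply]; rfl
  simp_rw [h1]
  rw [lintegral_indicator hS, Measure.restrict_restrict hS, setLIntegral_one]
  rcases eq_or_ne c ⊤ with hc | hc
  · simp [hc]
  · have hset : {v : ℝ | ENNReal.ofReal v < c} ∩ Set.Ioi 0 = Set.Ioo 0 c.toReal := by
      ext v
      simp only [Set.mem_inter_iff, Set.mem_setOf_eq, Set.mem_Ioi, Set.mem_Ioo]
      constructor
      · rintro ⟨h2, h3⟩
        exact ⟨h3, (ENNReal.ofReal_lt_iff_lt_toReal h3.le hc).mp h2⟩
      · rintro ⟨h3, h2⟩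
        exact ⟨(ENNReal.ofReal_lt_iff_lt_toReal h3.le hc).mpr h2, h3⟩
    rw [hset, Real.volume_Ioo, sub_zero, ENNReal.ofReal_toReal hc]

lemma layercake (g : ℝ → ℝ≥0∞) (hg : Measurable g) {A : Set ℝ} (hA : MeasurableSet A) :
    ∫⁻ u in A, g u
      = ∫⁻ v in Set.Ioi (0:ℝ), volume ({u | ENNReal.ofReal v < g u} ∩ A) := by
  have hmeas : Measurable (Function.uncurry
      fun u v : ℝ => if ENNReal.ofReal v < g u then (1:ℝ≥0∞) else 0) := by
    have hset : MeasurableSet {p : ℝ × ℝ | ENNReal.ofReal p.2 < g p.1} :=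
      measurableSet_lt (ENNReal.measurable_ofReal.comp measurable_snd) (hg.comp measurable_fst)
    exact Measurable.ite hset measurable_const measurable_const
  calc ∫⁻ u in A, g u
      = ∫⁻ u in A, ∫⁻ v in Set.Ioi (0:ℝ),
          (if ENNReal.ofReal v < g u then (1:ℝ≥0∞) else 0) := by
        refine lintegral_congr fun u => (aux_slice (g u)).symm
    _ = ∫⁻ v in Set.Ioi (0:ℝ), ∫⁻ u in A,
          (if ENNReal.ofReal v < g u then (1:ℝ≥0∞) else 0) :=
        lintegral_lintegral_swap hmeas.aemeasurable
    _ = ∫⁻ v in Set.Ioi (0:ℝ), volume ({u | ENNReal.ofReal v < g u} ∩ A) := by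
      refine lintegral_congr fun v => ?_
      have hSv : MeasurableSet {u : ℝ | ENNReal.ofReal v < g u} :=
        hg (measurableSet_Ioi (a := ENNReal.ofReal v))
      have h1 : ∀ u : ℝ, (if ENNReal.ofReal v < g u then (1:ℝ≥0∞) else 0)
          = {u' : ℝ | ENNReal.ofReal v < g u'}.indicator (fun _ => 1) u := by
        intro u; rw [Set.indicator_apply]; rfl
      simp_rw [h1]
      rw [lintegral_indicator hSv, Measure.restrict_restrict hSv, setLIntegral_one]

lemma vol_inter (c : ℝ≥0∞) {s : ℝ} (hs : 0 < s) :
    volume ({u : ℝ | ENNReal.ofReal u < c} ∩ Set.Ioc 0 s)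
      = min (ENNReal.ofReal s) c := by
  rcases eq_or_ne c ⊤ with hc | hc
  · have : {u : ℝ | ENNReal.ofReal u < c} = Set.univ := by
      ext u; simp [hc, ENNReal.ofReal_lt_top]
    rw [this, Set.univ_inter, Real.volume_Ioc, sub_zero, hc]
    simp
  · rcases le_or_gt c.toReal s with h | h
    · have hset : {u : ℝ | ENNReal.ofReal u < c} ∩ Set.Ioc 0 s = Set.Ioo 0 c.toReal := by
        ext u
        simp only [Set.mem_inter_iff, Set.mem_setOf_eq, Set.mem_Ioc, Set.mem_Ioo]
        constructor
        · rintro ⟨h1, h2, h3⟩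
          exact ⟨h2, (ENNReal.ofReal_lt_iff_lt_toReal h2.le hc).mp h1⟩
        · rintro ⟨h2, h3⟩
          exact ⟨(ENNReal.ofReal_lt_iff_lt_toReal h2.le hc).mpr h3, h2, h3.le.trans h⟩
      rw [hset, Real.volume_Ioo, sub_zero, ENNReal.ofReal_toReal hc,
        min_eq_right]
      rw [← ENNReal.ofReal_toReal hc]
      exact ENNReal.ofReal_le_ofReal h
    · have hset : {u : ℝ | ENNReal.ofReal u < c} ∩ Set.Ioc 0 s = Set.Ioc 0 s := by
        refine Set.inter_eq_right.mpr fun u hu => ?_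
        simp only [Set.mem_setOf_eq]
        exact (ENNReal.ofReal_lt_iff_lt_toReal hu.1.le hc).mpr (lt_of_le_of_lt hu.2 h)
      rw [hset, Real.volume_Ioc, sub_zero, min_eq_left]
      exact le_of_lt ((ENNReal.ofReal_lt_iff_lt_toReal (by positivity) hc).mpr h)

end Helpers3
section Master

variable {α : Type*} [MeasurableSpace α] (μ : Measure α) (f : α → ℝ)

/-- The master identity: `s·(f**(s) - f*(s)) = ∫_{f*(s)}^∞ λ_f(v) dv`. -/
lemma master (hf : Measurable f) {s : ℝ} (hs : 0 < s) (hR : rearr μ f s ≠ ⊤) :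
    ENNReal.ofReal s * (dstar μ f s - rearr μ f s)
      = ∫⁻ v in Set.Ioi ((rearr μ f s).toReal), distFun μ f v := by
  set r : ℝ := (rearr μ f s).toReal with hr
  have hr0 : 0 ≤ r := ENNReal.toReal_nonneg
  -- Step A: layer cake for the rearrangement
  have hA : ∫⁻ u in Set.Ioc (0:ℝ) s, rearr μ f u
      = ∫⁻ v in Set.Ioi (0:ℝ), min (ENNReal.ofReal s) (distFun μ f v) := by
    rw [layercake (rearr μ f) (R_meas μ f) measurableSet_Ioc]
    refine setLIntegral_congr_fun measurableSet_Ioi ?_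
    intro v hv
    have : {u | ENNReal.ofReal v < rearr μ f u} ∩ Set.Ioc 0 s
        = {u : ℝ | ENNReal.ofReal u < distFun μ f v} ∩ Set.Ioc 0 s := by
      ext u
      simp only [Set.mem_inter_iff, Set.mem_setOf_eq, Set.mem_Ioc]
      constructor
      · rintro ⟨h1, h2⟩
        exact ⟨(dual μ f hf h2.1 hv).mp h1, h2⟩
      · rintro ⟨h1, h2⟩
        exact ⟨(dual μ f hf h2.1 hv).mpr h1, h2⟩
    beta_reduce
    rw [this, vol_inter (distFun μ f v) hs]
  -- pointwise splitting of the min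
  have hsplit : ∀ v : ℝ, 0 < v → min (ENNReal.ofReal s) (distFun μ f v)
      = (if ENNReal.ofReal v < rearr μ f s then ENNReal.ofReal s else 0)
        + (if r ≤ v then distFun μ f v else 0) := by
    intro v hv
    rcases lt_or_ge (ENNReal.ofReal v) (rearr μ f s) with h | h
    · have h2 : ENNReal.ofReal s < distFun μ f v := (dual μ f hf hs hv).mp h
      have h3 : ¬ r ≤ v := by
        intro hrv
        have : rearr μ f s ≤ ENNReal.ofReal v :=
          (ENNReal.le_ofReal_iff_toReal_le hR hv.le).mpr hrv
        exact absurd this (not_le.mpr h)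
      rw [if_pos h, if_neg h3, add_zero, min_eq_left h2.le]
    · have h2 : ¬ ENNReal.ofReal s < distFun μ f v := by
        intro hc
        exact absurd ((dual μ f hf hs hv).mpr hc) (not_lt.mpr h)
      have h3 : r ≤ v := (ENNReal.le_ofReal_iff_toReal_le hR hv.le).mp h
      rw [if_neg (not_lt.mpr h), if_pos h3, zero_add, min_eq_right (not_lt.mp h2)]
  -- the two pieces
  have hmeas1 : Measurable fun v : ℝ =>
      (if ENNReal.ofReal v < rearr μ f s then ENNReal.ofReal s else 0) := by
    refine Measurable.ite ?_ measurable_const measurable_const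
    exact ENNReal.measurable_ofReal (measurableSet_Iio (a := rearr μ f s))
  have hB : ∫⁻ v in Set.Ioi (0:ℝ),
      (if ENNReal.ofReal v < rearr μ f s then ENNReal.ofReal s else 0)
      = ENNReal.ofReal s * rearr μ f s := by
    have h1 : ∀ v : ℝ, (if ENNReal.ofReal v < rearr μ f s then ENNReal.ofReal s else 0)
        = ENNReal.ofReal s * (if ENNReal.ofReal v < rearr μ f s then 1 else 0) := by
      intro v; split <;> simp
    simp_rw [h1]
    rw [lintegral_const_mul _ (by
      refine Measurable.ite ?_ measurable_const measurable_const
      exact ENNReal.measurable_ofReal (measurableSet_Iio (a := rearr μ f s))),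
      aux_slice]
  have hC : ∫⁻ v in Set.Ioi (0:ℝ), (if r ≤ v then distFun μ f v else 0)
      = ∫⁻ v in Set.Ioi r, distFun μ f v := by
    have h1 : ∀ v : ℝ, (if r ≤ v then distFun μ f v else 0)
        = (Set.Ici r).indicator (distFun μ f) v := by
      intro v; rw [Set.indicator_apply]; rfl
    simp_rw [h1]
    rw [lintegral_indicator measurableSet_Ici, Measure.restrict_restrict measurableSet_Ici]
    refine setLIntegral_congr ?_
    rcases eq_or_lt_of_le hr0 with h0 | h0
    · have heq : Set.Ici r ∩ Set.Ioi (0:ℝ) = Set.Ioi r := by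
        rw [← h0]; exact Set.inter_eq_right.mpr fun x hx => Set.mem_Ici.mpr (le_of_lt hx)
      rw [heq]
      exact Filter.EventuallyEq.rfl
    · have heq : Set.Ici r ∩ Set.Ioi (0:ℝ) = Set.Ici r :=
        Set.inter_eq_left.mpr fun x hx => lt_of_lt_of_le h0 hx
      rw [heq]
      exact (MeasureTheory.Ioi_ae_eq_Ici (a := r)).symm
  -- combine
  have hDs : ENNReal.ofReal s * dstar μ f s = ∫⁻ u in Set.Ioc (0:ℝ) s, rearr μ f u := by
    rw [dstar, ENNReal.mul_div_cancel (by simp [hs]) ENNReal.ofReal_ne_top]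
  have hkey : ENNReal.ofReal s * dstar μ f s
      = ENNReal.ofReal s * rearr μ f s + ∫⁻ v in Set.Ioi r, distFun μ f v := by
    rw [hDs, hA, ← hB, ← hC,
      ← lintegral_add_left (μ := volume.restrict (Set.Ioi (0:ℝ))) hmeas1]
    refine setLIntegral_congr_fun measurableSet_Ioi ?_
    exact fun v hv => hsplit v hv
  -- divide out
  have hfin : ENNReal.ofReal s * rearr μ f s ≠ ⊤ :=
    ENNReal.mul_ne_top ENNReal.ofReal_ne_top hR
  have hD2 : dstar μ f s - rearr μ f s
      = (∫⁻ v in Set.Ioi r, distFun μ f v) / ENNReal.ofReal s := by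
    have h1 : dstar μ f s
        = rearr μ f s + (∫⁻ v in Set.Ioi r, distFun μ f v) / ENNReal.ofReal s := by
      refine (ENNReal.mul_right_inj (a := ENNReal.ofReal s) (by simp [hs])
        ENNReal.ofReal_ne_top).mp ?_
      rw [hkey, mul_add, ENNReal.mul_div_cancel (by simp [hs]) ENNReal.ofReal_ne_top]
    rw [h1, ENNReal.add_sub_cancel_left hR]
  rw [hD2, ENNReal.mul_div_cancel (by simp [hs]) ENNReal.ofReal_ne_top]

end Master
section Sup

variable {α : Type*} [MeasurableSpace α] (μ : Measure α) (f : α → ℝ)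

lemma unmul {c : ℝ≥0∞} (hc0 : c ≠ 0) (hct : c ≠ ⊤) (e : ℝ) {X M : ℝ≥0∞}
    (h : c ^ e * X ≤ M) : X ≤ c ^ (-e) * M := by
  have h2 := mul_le_mul_right h (c ^ (-e))
  rwa [← mul_assoc, ← ENNReal.rpow_add _ _ hc0 hct, neg_add_cancel,
    ENNReal.rpow_zero, one_mul] at h2

lemma pow_rpow (c : ℝ≥0∞) (n : ℕ) (e : ℝ) : (c ^ n) ^ e = (c ^ e) ^ n := by
  rw [← ENNReal.rpow_natCast c n, ← ENNReal.rpow_mul, mul_comm, ENNReal.rpow_mul,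
    ENNReal.rpow_natCast]

lemma annuli_cover {t : ℝ} (ht : 0 < t) :
    Set.Ioc (0:ℝ) t = ⋃ k : ℕ, Set.Ioc (t/2^(k+1)) (t/2^k) := by
  ext u
  simp only [Set.mem_Ioc, Set.mem_iUnion]
  constructor
  · rintro ⟨hu0, hut⟩
    have hP : ∃ n : ℕ, t/2^(n+1) < u := by
      obtain ⟨n, hn⟩ := pow_unbounded_of_one_lt (t/u) (by norm_num : (1:ℝ) < 2)
      refine ⟨n, ?_⟩
      rw [div_lt_iff₀ (by positivity)]
      rw [div_lt_iff₀ hu0] at hn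
      have h2 : (2:ℝ)^n ≤ 2^(n+1) := by
        apply pow_le_pow_right₀ (by norm_num) (by omega)
      nlinarith
    refine ⟨Nat.find hP, Nat.find_spec hP, ?_⟩
    rcases Nat.eq_zero_or_pos (Nat.find hP) with h | h
    · rw [h]; simpa using hut
    · obtain ⟨m, hm⟩ := Nat.exists_eq_add_of_lt h
      have := Nat.find_min hP (m := m) (by omega)
      push_neg at this
      rw [hm] at *
      simpa [Nat.add_comm] using this
  · rintro ⟨k, h1, h2⟩
    have h3 : (0:ℝ) < t/2^(k+1) := by positivity
    refine ⟨h3.trans h1, h2.trans ?_⟩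
    exact div_le_self ht.le (one_le_pow₀ (by norm_num))

lemma annuli_disj {t : ℝ} (ht : 0 < t) :
    Pairwise (Function.onFun Disjoint fun k : ℕ => Set.Ioc (t/2^(k+1)) (t/2^k)) := by
  have hmono : ∀ a b : ℕ, a ≤ b → t/2^b ≤ t/2^a := by
    intro a b hab
    apply div_le_div_of_nonneg_left ht.le (by positivity)
    exact pow_le_pow_right₀ (by norm_num) hab
  intro i j hij
  rcases hij.lt_or_gt with h | h
  · refine Set.Ioc_disjoint_Ioc.mpr ?_
    exact le_trans (min_le_right _ _) (le_trans (hmono (i+1) j h) (le_max_left _ _))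
  · refine Set.Ioc_disjoint_Ioc.mpr ?_
    exact le_trans (min_le_left _ _) (le_trans (hmono (j+1) i h) (le_max_right _ _))

end Sup
section Part1

variable {α : Type*} [MeasurableSpace α] (μ : Measure α) (f : α → ℝ)

lemma one_sub_inv_pos {p : ℝ} (hp : 1 < p) : 0 < 1 - 1/p := by
  have h1 : 1/p < 1 := by rw [div_lt_one (by linarith)]; linarith
  linarith

lemma part1_fwd {p : ℝ} (hp : 1 < p) (h : wkNormStar μ p f ≠ ⊤) :
    wkNormStarStar μ p f ≠ ⊤ := by
  set M := wkNormStar μ p f with hM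
  set ρ : ℝ≥0∞ := (ENNReal.ofReal (1/2)) ^ (1 - 1/p) with hρ
  have hρ1 : ρ < 1 :=
    ENNReal.rpow_lt_one (ENNReal.ofReal_lt_one.mpr (by norm_num)) (one_sub_inv_pos hp)
  have hgeo : ∑' k : ℕ, ρ ^ (k+1) ≤ (1 - ρ)⁻¹ := by
    calc ∑' k : ℕ, ρ^(k+1) ≤ ∑' k : ℕ, ρ^k := by
          refine ENNReal.tsum_le_tsum fun k => ?_
          rw [pow_succ]
          exact le_trans (mul_le_mul_right hρ1.le _) (by rw [mul_one])
      _ = (1-ρ)⁻¹ := ENNReal.tsum_geometric ρ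
  have hfin : M * (1-ρ)⁻¹ ≠ ⊤ :=
    ENNReal.mul_ne_top h (ENNReal.inv_ne_top.mpr (by simp [tsub_eq_zero_iff_le, hρ1.not_ge]))
  refine ne_top_of_le_ne_top hfin ?_
  refine iSup₂_le fun t ht => ?_
  have hc0 : (ENNReal.ofReal t) ≠ 0 := by simp [ht]
  have hRb : ∀ u : ℝ, 0 < u → rearr μ f u ≤ (ENNReal.ofReal u)^(-(1/p)) * M := by
    intro u hu
    refine unmul (by simp [hu]) ENNReal.ofReal_ne_top _ ?_
    exact le_iSup₂ (f := fun s (_ : 0 < s) => ENNReal.ofReal s ^ (1/p) * rearr μ f s) u hu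
  have hAnn : ∀ k : ℕ, ∫⁻ u in Set.Ioc (t/2^(k+1)) (t/2^k), rearr μ f u
      ≤ (ENNReal.ofReal t)^(1-1/p) * ρ^(k+1) * M := by
    intro k
    have ha : (0:ℝ) < t/2^(k+1) := by positivity
    have ha0 : (ENNReal.ofReal (t/2^(k+1))) ≠ 0 := by simp [ha]
    calc ∫⁻ u in Set.Ioc (t/2^(k+1)) (t/2^k), rearr μ f u
        ≤ ENNReal.ofReal (t/2^k - t/2^(k+1)) * rearr μ f (t/2^(k+1)) := int_Ioc_le μ f _ _
      _ = ENNReal.ofReal (t/2^(k+1)) * rearr μ f (t/2^(k+1)) := by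
          have heq : t/2^k - t/2^(k+1) = t/2^(k+1) := by
            rw [pow_succ]; field_simp; ring
          rw [heq]
      _ ≤ ENNReal.ofReal (t/2^(k+1)) * ((ENNReal.ofReal (t/2^(k+1)))^(-(1/p)) * M) :=
          mul_le_mul_right (hRb _ ha) _
      _ = (ENNReal.ofReal (t/2^(k+1)))^(1-1/p) * M := by
          rw [← mul_assoc]
          congr 1
          nth_rewrite 1 [← ENNReal.rpow_one (ENNReal.ofReal (t/2^(k+1)))]
          rw [← ENNReal.rpow_add _ _ ha0 ENNReal.ofReal_ne_top, ← sub_eq_add_neg]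
      _ = (ENNReal.ofReal t)^(1-1/p) * ρ^(k+1) * M := by
          congr 2
          rw [show t/2^(k+1) = t * (1/2)^(k+1) by rw [one_div, inv_pow, div_eq_mul_inv]]
          rw [ENNReal.ofReal_mul ht.le, ENNReal.ofReal_pow (by norm_num : (0:ℝ) ≤ 1/2),
            ENNReal.mul_rpow_of_ne_top ENNReal.ofReal_ne_top
              (ENNReal.pow_ne_top ENNReal.ofReal_ne_top), pow_rpow]
  have hA : ∫⁻ u in Set.Ioc (0:ℝ) t, rearr μ f u
      ≤ (ENNReal.ofReal t)^(1-1/p) * M * (1-ρ)⁻¹ := by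
    rw [annuli_cover ht, lintegral_iUnion (fun k => measurableSet_Ioc) (annuli_disj ht)]
    calc ∑' k : ℕ, ∫⁻ u in Set.Ioc (t/2^(k+1)) (t/2^k), rearr μ f u
        ≤ ∑' k : ℕ, (ENNReal.ofReal t)^(1-1/p) * ρ^(k+1) * M := ENNReal.tsum_le_tsum hAnn
      _ = (ENNReal.ofReal t)^(1-1/p) * M * ∑' k : ℕ, ρ^(k+1) := by
          simp_rw [mul_right_comm _ _ M]
          rw [ENNReal.tsum_mul_left]
      _ ≤ (ENNReal.ofReal t)^(1-1/p) * M * (1-ρ)⁻¹ := mul_le_mul_right hgeo _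
  calc ENNReal.ofReal t ^ (1/p) * dstar μ f t
      ≤ ENNReal.ofReal t ^ (1/p)
          * (((ENNReal.ofReal t)^(1-1/p) * M * (1-ρ)⁻¹) / ENNReal.ofReal t) :=
        mul_le_mul_right (ENNReal.div_le_div_right hA _) _
    _ = (ENNReal.ofReal t ^ (1/p) * ENNReal.ofReal t ^ (1-1/p)
          * ENNReal.ofReal t ^ (-1:ℝ)) * (M * (1-ρ)⁻¹) := by
        rw [div_eq_mul_inv ((ENNReal.ofReal t)^(1-1/p) * M * (1-ρ)⁻¹) (ENNReal.ofReal t),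
          ← ENNReal.rpow_neg_one (ENNReal.ofReal t)]
        ring
    _ = M * (1-ρ)⁻¹ := by
        rw [← ENNReal.rpow_add _ _ hc0 ENNReal.ofReal_ne_top,
          ← ENNReal.rpow_add _ _ hc0 ENNReal.ofReal_ne_top]
        norm_num

lemma part1_bwd {p : ℝ} (h : wkNormStarStar μ p f ≠ ⊤) : wkNormStar μ p f ≠ ⊤ := by
  refine ne_top_of_le_ne_top h (iSup₂_le fun t ht => ?_)
  refine le_trans (mul_le_mul_right (R_le_D μ f ht) _) ?_
  exact le_iSup₂ (f := fun s (_ : 0 < s) => ENNReal.ofReal s ^ (1/p) * dstar μ f s) t ht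

lemma sharp_le_starstar {p : ℝ} (h : wkNormStarStar μ p f ≠ ⊤) : sharpNorm μ p f ≠ ⊤ := by
  refine ne_top_of_le_ne_top h (iSup₂_le fun t ht => ?_)
  refine le_trans (mul_le_mul_right tsub_le_self _) ?_
  exact le_iSup₂ (f := fun s (_ : 0 < s) => ENNReal.ofReal s ^ (1/p) * dstar μ f s) t ht

end Part1
section Part2

variable {α : Type*} [MeasurableSpace α] (μ : Measure α) (f : α → ℝ)

lemma doubling_step (hlim : Filter.Tendsto (dstar μ f) Filter.atTop (nhds 0))
    {p : ℝ} {K : ℝ≥0∞}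
    (hK : ∀ s : ℝ, 0 < s →
      ENNReal.ofReal s ^ (1/p) * (dstar μ f s - rearr μ f s) ≤ K)
    {t : ℝ} (ht : 0 < t) :
    dstar μ f t ≤ dstar μ f (2*t) + (ENNReal.ofReal (2*t)) ^ (-(1/p)) * K := by
  have h2t : 0 < 2*t := by linarith
  have hc0 : (ENNReal.ofReal t) ≠ 0 := by simp [ht]
  have hRfin : rearr μ f (2*t) ≠ ⊤ := R_lt_top μ f hlim h2t
  have hDR : dstar μ f (2*t) - rearr μ f (2*t) ≤ (ENNReal.ofReal (2*t)) ^ (-(1/p)) * K :=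
    unmul (by simp [h2t, ht]) ENNReal.ofReal_ne_top _ (hK (2*t) h2t)
  have hsplit : ∫⁻ u in Set.Ioc (0:ℝ) (2*t), rearr μ f u
      = (∫⁻ u in Set.Ioc (0:ℝ) t, rearr μ f u) + ∫⁻ u in Set.Ioc t (2*t), rearr μ f u := by
    rw [← Set.Ioc_union_Ioc_eq_Ioc ht.le (by linarith : t ≤ 2*t),
      lintegral_union measurableSet_Ioc (Set.Ioc_disjoint_Ioc_of_le le_rfl)]
  have hmid : ENNReal.ofReal t * rearr μ f (2*t) ≤ ∫⁻ u in Set.Ioc t (2*t), rearr μ f u := by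
    have := int_Ioc_ge μ f t (2*t) (by linarith)
    rwa [show 2*t - t = t by ring] at this
  have hkey : dstar μ f t + rearr μ f (2*t)
      ≤ dstar μ f (2*t) + dstar μ f (2*t) := by
    have h1 : dstar μ f t + rearr μ f (2*t)
        = ((∫⁻ u in Set.Ioc (0:ℝ) t, rearr μ f u) + ENNReal.ofReal t * rearr μ f (2*t))
            / ENNReal.ofReal t := by
      have hcanc : ENNReal.ofReal t * rearr μ f (2*t) / ENNReal.ofReal t
          = rearr μ f (2*t) := by
        rw [mul_comm, mul_div_assoc, ENNReal.div_self hc0 ENNReal.ofReal_ne_top, mul_one]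
      rw [ENNReal.add_div, hcanc, dstar]
    have h2 : dstar μ f (2*t) + dstar μ f (2*t)
        = (∫⁻ u in Set.Ioc (0:ℝ) (2*t), rearr μ f u) / ENNReal.ofReal t := by
      rw [← two_mul, dstar, show ENNReal.ofReal (2*t) = 2 * ENNReal.ofReal t by
          rw [ENNReal.ofReal_mul (by norm_num)]; norm_num,
        ← mul_div_assoc, ENNReal.mul_div_mul_left _ _ (by norm_num) ENNReal.ofNat_ne_top]
    rw [h1, h2]
    refine ENNReal.div_le_div_right ?_ _
    calc (∫⁻ u in Set.Ioc (0:ℝ) t, rearr μ f u) + ENNReal.ofReal t * rearr μ f (2*t)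
        ≤ (∫⁻ u in Set.Ioc (0:ℝ) t, rearr μ f u) + ∫⁻ u in Set.Ioc t (2*t), rearr μ f u := by
          gcongr
      _ = ∫⁻ u in Set.Ioc (0:ℝ) (2*t), rearr μ f u := hsplit.symm
  calc dstar μ f t ≤ (dstar μ f (2*t) + dstar μ f (2*t)) - rearr μ f (2*t) :=
        ENNReal.le_sub_of_add_le_right hRfin hkey
    _ ≤ dstar μ f (2*t) + (dstar μ f (2*t) - rearr μ f (2*t)) := by
        refine tsub_le_iff_right.mpr ?_
        rw [add_assoc]
        gcongr
        exact le_tsub_add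
    _ ≤ dstar μ f (2*t) + (ENNReal.ofReal (2*t)) ^ (-(1/p)) * K := by gcongr

end Part2

section Part2b

variable {α : Type*} [MeasurableSpace α] (μ : Measure α) (f : α → ℝ)

lemma part2_bwd (hlim : Filter.Tendsto (dstar μ f) Filter.atTop (nhds 0))
    {p : ℝ} (hp : 1 < p) (h : sharpNorm μ p f ≠ ⊤) : wkNormStarStar μ p f ≠ ⊤ := by
  have hp0 : 0 < 1/p := by positivity
  set K := sharpNorm μ p f with hKdef
  have hK : ∀ s : ℝ, 0 < s →
      ENNReal.ofReal s ^ (1/p) * (dstar μ f s - rearr μ f s) ≤ K := fun s hs =>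
    le_iSup₂ (f := fun s (_ : 0 < s) =>
      ENNReal.ofReal s ^ (1/p) * (dstar μ f s - rearr μ f s)) s hs
  set σ : ℝ≥0∞ := (2:ℝ≥0∞) ^ (-(1/p)) with hσ
  have hσ1 : σ < 1 :=
    ENNReal.rpow_lt_one_of_one_lt_of_neg (by norm_num) (by linarith)
  have hgeo : ∑' k : ℕ, σ ^ (k+1) ≤ (1 - σ)⁻¹ := by
    calc ∑' k : ℕ, σ^(k+1) ≤ ∑' k : ℕ, σ^k := by
          refine ENNReal.tsum_le_tsum fun k => ?_
          rw [pow_succ]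
          exact le_trans (mul_le_mul_right hσ1.le _) (by rw [mul_one])
      _ = (1-σ)⁻¹ := ENNReal.tsum_geometric σ
  have hfin : (1-σ)⁻¹ * K ≠ ⊤ :=
    ENNReal.mul_ne_top (ENNReal.inv_ne_top.mpr (by simp [tsub_eq_zero_iff_le, hσ1.not_ge])) h
  refine ne_top_of_le_ne_top hfin (iSup₂_le fun t ht => ?_)
  have hc0 : (ENNReal.ofReal t) ≠ 0 := by simp [ht]
  -- the iteration
  have hiter : ∀ n : ℕ, dstar μ f t ≤ dstar μ f (2^n * t)
      + (∑ k ∈ Finset.range n, (ENNReal.ofReal (2^(k+1) * t)) ^ (-(1/p))) * K := by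
    intro n
    induction n with
    | zero => simpa using le_refl (dstar μ f t)
    | succ n ih =>
      refine le_trans ih ?_
      have h2n : (0:ℝ) < 2^n * t := by positivity
      have hstep := doubling_step μ f hlim hK h2n
      rw [show 2*(2^n*t) = 2^(n+1)*t by ring] at hstep
      calc dstar μ f (2^n*t)
            + (∑ k ∈ Finset.range n, (ENNReal.ofReal (2^(k+1) * t)) ^ (-(1/p))) * K
          ≤ (dstar μ f (2^(n+1)*t) + (ENNReal.ofReal (2^(n+1)*t))^(-(1/p)) * K)
            + (∑ k ∈ Finset.range n, (ENNReal.ofReal (2^(k+1) * t)) ^ (-(1/p))) * K := by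
            gcongr
        _ = dstar μ f (2^(n+1)*t)
            + (∑ k ∈ Finset.range (n+1), (ENNReal.ofReal (2^(k+1) * t)) ^ (-(1/p))) * K := by
            rw [Finset.sum_range_succ, add_mul]
            ring
  -- bounding the sum
  have hterm : ∀ k : ℕ, (ENNReal.ofReal (2^(k+1) * t)) ^ (-(1/p))
      = σ^(k+1) * (ENNReal.ofReal t) ^ (-(1/p)) := by
    intro k
    rw [ENNReal.ofReal_mul (by positivity), ENNReal.ofReal_pow (by norm_num : (0:ℝ) ≤ 2),
      ENNReal.ofReal_ofNat,
      ENNReal.mul_rpow_of_ne_top (ENNReal.pow_ne_top ENNReal.ofNat_ne_top)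
        ENNReal.ofReal_ne_top, pow_rpow]
  have hsum : ∀ n : ℕ, (∑ k ∈ Finset.range n, (ENNReal.ofReal (2^(k+1) * t)) ^ (-(1/p)))
      ≤ (1-σ)⁻¹ * (ENNReal.ofReal t) ^ (-(1/p)) := by
    intro n
    calc ∑ k ∈ Finset.range n, (ENNReal.ofReal (2^(k+1) * t)) ^ (-(1/p))
        = ∑ k ∈ Finset.range n, σ^(k+1) * (ENNReal.ofReal t) ^ (-(1/p)) := by
          simp_rw [hterm]
      _ = (∑ k ∈ Finset.range n, σ^(k+1)) * (ENNReal.ofReal t) ^ (-(1/p)) := by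
          rw [Finset.sum_mul]
      _ ≤ (∑' k : ℕ, σ^(k+1)) * (ENNReal.ofReal t) ^ (-(1/p)) :=
          mul_le_mul_left (ENNReal.sum_le_tsum _) _
      _ ≤ (1-σ)⁻¹ * (ENNReal.ofReal t) ^ (-(1/p)) := mul_le_mul_left hgeo _
  set C : ℝ≥0∞ := (1-σ)⁻¹ * (ENNReal.ofReal t) ^ (-(1/p)) * K with hC
  have hDC : dstar μ f t ≤ C := by
    have hpow : Filter.Tendsto (fun n : ℕ => (2:ℝ)^n * t) Filter.atTop Filter.atTop :=
      (tendsto_pow_atTop_atTop_of_one_lt (by norm_num : (1:ℝ) < 2)).atTop_mul_const ht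
    have htend : Filter.Tendsto (fun n : ℕ => dstar μ f (2^n * t) + C)
        Filter.atTop (nhds (0 + C)) :=
      Filter.Tendsto.add (hlim.comp hpow) tendsto_const_nhds
    have hev : ∀ n : ℕ, dstar μ f t ≤ dstar μ f (2^n * t) + C := by
      intro n
      refine le_trans (hiter n) ?_
      gcongr
      exact mul_le_mul_left (hsum n) K
    have := ge_of_tendsto htend (Filter.Eventually.of_forall hev)
    rwa [zero_add] at this
  calc ENNReal.ofReal t ^ (1/p) * dstar μ f t
      ≤ ENNReal.ofReal t ^ (1/p) * C := mul_le_mul_right hDC _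
    _ = (ENNReal.ofReal t ^ (1/p) * ENNReal.ofReal t ^ (-(1/p))) * ((1-σ)⁻¹ * K) := by
        rw [hC]; ring
    _ = (1-σ)⁻¹ * K := by
        rw [← ENNReal.rpow_add _ _ hc0 ENNReal.ofReal_ne_top]
        norm_num

end Part2b
section Part3

variable {α : Type*} [MeasurableSpace α] (μ : Measure α) (f : α → ℝ)

lemma part3_fwd (hf : Measurable f)
    (hlim : Filter.Tendsto (dstar μ f) Filter.atTop (nhds 0))
    {p : ℝ} (hp : 1 < p) (h : sharpNorm μ p f ≠ ⊤) : sharpSharpNorm μ p f ≠ ⊤ := by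
  set K := sharpNorm μ p f with hKdef
  have hK : ∀ s : ℝ, 0 < s →
      ENNReal.ofReal s ^ (1/p) * (dstar μ f s - rearr μ f s) ≤ K := fun s hs =>
    le_iSup₂ (f := fun s (_ : 0 < s) =>
      ENNReal.ofReal s ^ (1/p) * (dstar μ f s - rearr μ f s)) s hs
  refine ne_top_of_le_ne_top h (iSup₂_le fun t ht => ?_)
  have hLfin : distFun μ f t ≠ ⊤ := L_lt_top μ f hlim ht
  rcases eq_or_ne (distFun μ f t) 0 with hL0 | hL0
  · have hint : ∫⁻ v in Set.Ioi t, distFun μ f v = 0 := by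
      have : ∀ v ∈ Set.Ioi t, distFun μ f v ≤ 0 := fun v hv => hL0 ▸ L_anti μ f (le_of_lt hv)
      refine le_antisymm ?_ (zero_le)
      calc ∫⁻ v in Set.Ioi t, distFun μ f v ≤ ∫⁻ _ in Set.Ioi t, 0 :=
            setLIntegral_mono' measurableSet_Ioi this
        _ = 0 := by simp
    rw [hint, mul_zero]
    exact zero_le
  · set s : ℝ := (distFun μ f t).toReal with hsdef
    have hs : 0 < s := ENNReal.toReal_pos hL0 hLfin
    have hofs : ENNReal.ofReal s = distFun μ f t := ENNReal.ofReal_toReal hLfin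
    have hRle : rearr μ f s ≤ ENNReal.ofReal t := R_le_of_mem μ f ht (le_of_eq hofs.symm)
    have hRfin : rearr μ f s ≠ ⊤ := ne_top_of_le_ne_top ENNReal.ofReal_ne_top hRle
    have hrle : (rearr μ f s).toReal ≤ t := ENNReal.toReal_le_of_le_ofReal ht.le hRle
    have hint : ∫⁻ v in Set.Ioi t, distFun μ f v
        ≤ ENNReal.ofReal s * (dstar μ f s - rearr μ f s) := by
      rw [master μ f hf hs hRfin]
      exact lintegral_mono_set (Set.Ioi_subset_Ioi hrle)
    have hc0 : (ENNReal.ofReal s) ≠ 0 := by simp [hs]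
    have hbound : ENNReal.ofReal s * (dstar μ f s - rearr μ f s)
        ≤ (ENNReal.ofReal s) ^ (1 - 1/p) * K := by
      calc ENNReal.ofReal s * (dstar μ f s - rearr μ f s)
          ≤ ENNReal.ofReal s * ((ENNReal.ofReal s) ^ (-(1/p)) * K) :=
            mul_le_mul_right (unmul hc0 ENNReal.ofReal_ne_top _ (hK s hs)) _
        _ = (ENNReal.ofReal s) ^ (1 - 1/p) * K := by
            rw [← mul_assoc]
            congr 1
            nth_rewrite 1 [← ENNReal.rpow_one (ENNReal.ofReal s)]
            rw [← ENNReal.rpow_add _ _ hc0 ENNReal.ofReal_ne_top, ← sub_eq_add_neg]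
    calc distFun μ f t ^ (-(1 - 1/p)) * ∫⁻ v in Set.Ioi t, distFun μ f v
        ≤ distFun μ f t ^ (-(1 - 1/p)) * ((ENNReal.ofReal s) ^ (1 - 1/p) * K) :=
          mul_le_mul_right (le_trans hint hbound) _
      _ = (distFun μ f t ^ (-(1 - 1/p)) * distFun μ f t ^ (1 - 1/p)) * K := by
          rw [hofs, ← mul_assoc]
      _ = K := by
          rw [← ENNReal.rpow_add _ _ hL0 hLfin, neg_add_cancel, ENNReal.rpow_zero, one_mul]

lemma part3_bwd (hf : Measurable f)
    (hlim : Filter.Tendsto (dstar μ f) Filter.atTop (nhds 0))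
    {p : ℝ} (hp : 1 < p) (h : sharpSharpNorm μ p f ≠ ⊤) : sharpNorm μ p f ≠ ⊤ := by
  have hexp : 0 < 1 - 1/p := one_sub_inv_pos hp
  set K := sharpSharpNorm μ p f with hKdef
  have hK : ∀ t : ℝ, 0 < t →
      distFun μ f t ^ (-(1 - 1/p)) * ∫⁻ v in Set.Ioi t, distFun μ f v ≤ K := fun t ht =>
    le_iSup₂ (f := fun t (_ : 0 < t) =>
      distFun μ f t ^ (-(1 - 1/p)) * ∫⁻ v in Set.Ioi t, distFun μ f v) t ht
  have hI : ∀ t : ℝ, 0 < t →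
      ∫⁻ v in Set.Ioi t, distFun μ f v ≤ (distFun μ f t) ^ (1 - 1/p) * K := by
    intro t ht
    rcases eq_or_ne (distFun μ f t) 0 with hL0 | hL0
    · have : ∀ v ∈ Set.Ioi t, distFun μ f v ≤ 0 := fun v hv => hL0 ▸ L_anti μ f (le_of_lt hv)
      calc ∫⁻ v in Set.Ioi t, distFun μ f v ≤ ∫⁻ _ in Set.Ioi t, 0 :=
            setLIntegral_mono' measurableSet_Ioi this
        _ = 0 := by simp
        _ ≤ _ := zero_le
    · have h2 := unmul hL0 (L_lt_top μ f hlim ht) (-(1 - 1/p)) (hK t ht)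
      rwa [neg_neg] at h2
  refine ne_top_of_le_ne_top h (iSup₂_le fun s hs => ?_)
  have hc0 : (ENNReal.ofReal s) ≠ 0 := by simp [hs]
  have hRfin : rearr μ f s ≠ ⊤ := R_lt_top μ f hlim hs
  set r : ℝ := (rearr μ f s).toReal with hrdef
  have hr0 : 0 ≤ r := ENNReal.toReal_nonneg
  have hLw : ∀ w : ℝ, r < w → distFun μ f w ≤ ENNReal.ofReal s := by
    intro w hw
    have hw0 : 0 < w := lt_of_le_of_lt hr0 hw
    have h1 : rearr μ f s < ENNReal.ofReal w := by
      rw [← ENNReal.ofReal_toReal hRfin]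
      exact (ENNReal.ofReal_lt_ofReal_iff (hr0.trans_lt hw)).mpr hw
    by_contra hc
    push_neg at hc
    exact absurd ((dual μ f hf hs hw0).mpr hc) (not_lt.mpr h1.le)
  have hIs : ∫⁻ v in Set.Ioi r, distFun μ f v ≤ K * (ENNReal.ofReal s) ^ (1 - 1/p) := by
    rcases eq_or_lt_of_le hr0 with hr | hr
    · -- r = 0 : monotone limit
      have hmono : Monotone fun n : ℕ => (Set.Ioi (1/((n:ℝ)+1))).indicator (distFun μ f) := by
        intro m n hmn v
        refine Set.indicator_le_indicator_of_subset (fun x hx => ?_) (fun _ => zero_le) v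
        simp only [Set.mem_Ioi] at hx ⊢
        have : (1:ℝ)/(n+1) ≤ 1/(m+1) := by
          apply one_div_le_one_div_of_le <;> [positivity; exact_mod_cast by omega]
        linarith
      have hsup : ∀ v : ℝ, (Set.Ioi r).indicator (distFun μ f) v
          = ⨆ n : ℕ, (Set.Ioi (1/((n:ℝ)+1))).indicator (distFun μ f) v := by
        intro v
        rcases le_or_gt v r with hv | hv
        · rw [Set.indicator_of_notMem (by simpa using hv.not_gt)]
          symm
          simp only [ENNReal.iSup_eq_zero]
          intro n
          refine Set.indicator_of_notMem ?_ _
          simp only [Set.mem_Ioi, not_lt]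
          refine hv.trans ?_
          rw [← hr]
          positivity
        · rw [Set.indicator_of_mem (Set.mem_Ioi.mpr hv)]
          obtain ⟨n, hn⟩ := exists_nat_one_div_lt (by rw [← hr] at hv; exact hv)
          refine le_antisymm ?_ ?_
          · refine le_iSup_of_le n ?_
            rw [Set.indicator_of_mem]
            simp only [Set.mem_Ioi]
            rw [← hr] at hv
            push_cast
            linarith [hn]
          · refine iSup_le fun n => ?_
            exact Set.indicator_le_self _ _ v
      calc ∫⁻ v in Set.Ioi r, distFun μ f v
          = ∫⁻ v, (Set.Ioi r).indicator (distFun μ f) v := by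
            rw [lintegral_indicator measurableSet_Ioi]
        _ = ∫⁻ v, ⨆ n : ℕ, (Set.Ioi (1/((n:ℝ)+1))).indicator (distFun μ f) v := by
            simp_rw [hsup]
        _ = ⨆ n : ℕ, ∫⁻ v, (Set.Ioi (1/((n:ℝ)+1))).indicator (distFun μ f) v :=
            lintegral_iSup (fun n => (L_meas μ f).indicator measurableSet_Ioi) hmono
        _ ≤ K * (ENNReal.ofReal s) ^ (1 - 1/p) := by
            refine iSup_le fun n => ?_
            have hn0 : (0:ℝ) < 1/((n:ℝ)+1) := by positivity
            rw [lintegral_indicator measurableSet_Ioi]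
            calc ∫⁻ v in Set.Ioi (1/((n:ℝ)+1)), distFun μ f v
                ≤ (distFun μ f (1/((n:ℝ)+1))) ^ (1 - 1/p) * K := hI _ hn0
              _ ≤ (ENNReal.ofReal s) ^ (1 - 1/p) * K := by
                  gcongr
                  exact hLw _ (by rw [← hr]; exact hn0)
              _ = K * (ENNReal.ofReal s) ^ (1 - 1/p) := mul_comm _ _
    · -- r > 0
      have hLr : distFun μ f r ≤ ENNReal.ofReal s := by
        by_contra hc
        push_neg at hc
        obtain ⟨w, hrw, hw⟩ := L_gt μ f hf r hc
        exact absurd hw (not_lt.mpr (hLw w hrw))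
      calc ∫⁻ v in Set.Ioi r, distFun μ f v
          ≤ (distFun μ f r) ^ (1 - 1/p) * K := hI r hr
        _ ≤ (ENNReal.ofReal s) ^ (1 - 1/p) * K := by gcongr
        _ = K * (ENNReal.ofReal s) ^ (1 - 1/p) := mul_comm _ _
  -- conclude
  have hmaster := master μ f hf hs hRfin
  calc ENNReal.ofReal s ^ (1/p) * (dstar μ f s - rearr μ f s)
      = ENNReal.ofReal s ^ (1/p) * (ENNReal.ofReal s)⁻¹
          * (ENNReal.ofReal s * (dstar μ f s - rearr μ f s)) := by
        rw [mul_assoc, ← mul_assoc (ENNReal.ofReal s)⁻¹,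
          ENNReal.inv_mul_cancel hc0 ENNReal.ofReal_ne_top, one_mul]
    _ = ENNReal.ofReal s ^ (1/p) * (ENNReal.ofReal s)⁻¹
          * ∫⁻ v in Set.Ioi r, distFun μ f v := by rw [hmaster]
    _ ≤ ENNReal.ofReal s ^ (1/p) * (ENNReal.ofReal s)⁻¹
          * (K * (ENNReal.ofReal s) ^ (1 - 1/p)) := mul_le_mul_right hIs _
    _ = (ENNReal.ofReal s ^ (1/p) * ENNReal.ofReal s ^ (-1:ℝ)
          * ENNReal.ofReal s ^ (1 - 1/p)) * K := by
        rw [← ENNReal.rpow_neg_one]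
        ring
    _ = K := by
        rw [← ENNReal.rpow_add _ _ hc0 ENNReal.ofReal_ne_top,
          ← ENNReal.rpow_add _ _ hc0 ENNReal.ofReal_ne_top,
          show (1:ℝ)/p + -1 + (1 - 1/p) = (0:ℝ) by ring, ENNReal.rpow_zero, one_mul]

end Part3
/-- for `1 < p < ∞` and `f` with `f**(∞) = 0`, the conditions
`‖f‖*_{L(p,∞)} < ∞` (equivalently `‖f‖_{L(p,∞)} < ∞`), `‖f‖^#_{L(p,∞)} < ∞` and
`‖f‖^{##}_{L(p,∞)} < ∞` are all equivalent. -/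
theorem weakLp_char {α : Type*} [MeasurableSpace α] (μ : Measure α) (p : ℝ) (hp : 1 < p)
    (f : α → ℝ) (hf : Measurable f)
    (hlim : Filter.Tendsto (dstar μ f) Filter.atTop (nhds 0)) :
    (wkNormStar μ p f ≠ ⊤ ↔ wkNormStarStar μ p f ≠ ⊤) ∧
    (wkNormStar μ p f ≠ ⊤ ↔ sharpNorm μ p f ≠ ⊤) ∧
    (sharpNorm μ p f ≠ ⊤ ↔ sharpSharpNorm μ p f ≠ ⊤) := by
  refine ⟨⟨part1_fwd μ f hp, part1_bwd μ f⟩,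
    ⟨fun h => sharp_le_starstar μ f (part1_fwd μ f hp h),
     fun h => part1_bwd μ f (part2_bwd μ f hlim hp h)⟩,
    part3_fwd μ f hf hlim hp, part3_bwd μ f hf hlim hp⟩
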